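/- Let u'_1,…,u'_N and u''_1,…,u''_M be formal power series in one variable ε over ℂ, and suppose there are matrices a' = (a'_{ij}) of size N×M and a'' = (a''_{ji}) of size M×N with formal power series entries such that u''_j = Σ_{i=1}^N u'_i·a'_{ij} for every j and u'_i = Σ_{j=1}^M u''_j·a''_{ji} for every i. Assume that u'_i = ε^{k'}·f_i for every i and u''_j = ε^{k''}·g_j for every j, where f_i, g_j are formal power series and the vectors p' = (f_1(0),…,f_N(0)) ∈ ℂ^N and p'' = (g_1(0),…,g_M(0)) ∈ ℂ^M of constant terms are both nonzero. Then k' = k'', and moreover p''_j = Σ_{i=1}^N p'_i·a'_{ij}(0) for every j and p'_i = Σ_{j=1}^M p''_j·a''_{ji}(0) for every i, where a'_{ij}(0), a''_{ji}(0) denote constant terms. -/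

import Mathlib

/-- If two finite families of formal power series `u'` and `u''` over `ℂ`
generate each other via matrices `a'`, `a''` of power series, and
`u'ᵢ = ε^k' · fᵢ`, `u''ⱼ = ε^k'' · gⱼ` with nonzero vectors of constant terms
`p' = (fᵢ(0))ᵢ`, `p'' = (gⱼ(0))ⱼ`, then `k' = k''`, `p''ⱼ = Σᵢ p'ᵢ · a'ᵢⱼ(0)`
and `p'ᵢ = Σⱼ p''ⱼ · a''ⱼᵢ(0)`. -/
theorem stmt_0 (N M : ℕ)
    (u' : Fin N → PowerSeries ℂ) (u'' : Fin M → PowerSeries ℂ)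
    (a' : Fin N → Fin M → PowerSeries ℂ) (a'' : Fin M → Fin N → PowerSeries ℂ)
    (h' : ∀ j, u'' j = ∑ i, u' i * a' i j)
    (h'' : ∀ i, u' i = ∑ j, u'' j * a'' j i)
    (k' k'' : ℕ) (f : Fin N → PowerSeries ℂ) (g : Fin M → PowerSeries ℂ)
    (hf : ∀ i, u' i = PowerSeries.X ^ k' * f i)
    (hg : ∀ j, u'' j = PowerSeries.X ^ k'' * g j)
    (hp' : (fun i => PowerSeries.constantCoeff (f i)) ≠ (0 : Fin N → ℂ))
    (hp'' : (fun j => PowerSeries.constantCoeff (g j)) ≠ (0 : Fin M → ℂ)) :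
    k' = k'' ∧
    (∀ j, PowerSeries.constantCoeff (g j) =
        ∑ i, PowerSeries.constantCoeff (f i) * PowerSeries.constantCoeff (a' i j)) ∧
    (∀ i, PowerSeries.constantCoeff (f i) =
        ∑ j, PowerSeries.constantCoeff (g j) * PowerSeries.constantCoeff (a'' j i)) := by
  classical
  obtain ⟨i0, hi0⟩ : ∃ i, PowerSeries.constantCoeff (f i) ≠ 0 := by
    by_contra h; push_neg at h; exact hp' (funext fun i => h i)
  obtain ⟨j0, hj0⟩ : ∃ j, PowerSeries.constantCoeff (g j) ≠ 0 := by
    by_contra h; push_neg at h; exact hp'' (funext fun j => h j)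
  have hc' : PowerSeries.coeff k' (u' i0) ≠ 0 := by
    rw [hf i0]
    have h := PowerSeries.coeff_X_pow_mul (f i0) k' 0
    rw [zero_add] at h
    rw [h]
    simpa using hi0
  have hc'' : PowerSeries.coeff k'' (u'' j0) ≠ 0 := by
    rw [hg j0]
    have h := PowerSeries.coeff_X_pow_mul (g j0) k'' 0
    rw [zero_add] at h
    rw [h]
    simpa using hj0
  have hd' : (PowerSeries.X : PowerSeries ℂ) ^ k'' ∣ u' i0 := by
    rw [h'' i0]
    exact Finset.dvd_sum fun j _ => by rw [hg j, mul_assoc]; exact dvd_mul_right _ _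
  have hd'' : (PowerSeries.X : PowerSeries ℂ) ^ k' ∣ u'' j0 := by
    rw [h' j0]
    exact Finset.dvd_sum fun i _ => by rw [hf i, mul_assoc]; exact dvd_mul_right _ _
  have hle1 : k'' ≤ k' := by
    by_contra h
    exact hc' ((PowerSeries.X_pow_dvd_iff.mp hd') k' (not_le.mp h))
  have hle2 : k' ≤ k'' := by
    by_contra h
    exact hc'' ((PowerSeries.X_pow_dvd_iff.mp hd'') k'' (not_le.mp h))
  have hk : k' = k'' := le_antisymm hle2 hle1
  subst hk
  have hXne : (PowerSeries.X : PowerSeries ℂ) ^ k' ≠ 0 := pow_ne_zero _ PowerSeries.X_ne_zero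
  refine ⟨rfl, fun j => ?_, fun i => ?_⟩
  · have : PowerSeries.X ^ k' * g j = PowerSeries.X ^ k' * ∑ i, f i * a' i j := by
      rw [← hg j, h' j, Finset.mul_sum]
      exact Finset.sum_congr rfl fun i _ => by rw [hf i, mul_assoc]
    have h2 := mul_left_cancel₀ hXne this
    have := congrArg (PowerSeries.constantCoeff) h2
    simpa [map_sum] using this
  · have : PowerSeries.X ^ k' * f i = PowerSeries.X ^ k' * ∑ j, g j * a'' j i := by
      rw [← hf i, h'' i, Finset.mul_sum]
      exact Finset.sum_congr rfl fun j _ => by rw [hg j, mul_assoc]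
    have h2 := mul_left_cancel₀ hXne this
    have := congrArg (PowerSeries.constantCoeff) h2
    simpa [map_sum] using this
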